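/- Let F be a finite set of points in ℝ² with range r, and let x be a point on an open subsegment s_k of a segment s such that the set F(x) = {f ∈ F : dist(f,x) < r} is the same for all x ∈ s_k (no circle of radius r around a source crosses s_k). Then s_k ⊆ int(conv F(s_k)) if and only if both endpoints of s_k lie in conv F(s_k) and at least one point of s_k lies in int(conv F(s_k)). -/

import Mathlib

abbrev Pt := EuclideanSpace ℝ (Fin 2)

/-- Let `s_k = (a, b)` be a nonempty open segment on which the illuminating set
`Fk = {f ∈ F : dist f x < r}` is the same for all `x ∈ s_k`. Then `s_k` is
contained in the interior of `conv Fk` iff both endpoints lie in `conv Fk` and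
at least one point of `s_k` lies in the interior of `conv Fk`. -/
theorem openSegment_subset_interior_iff (F : Finset Pt) (r : ℝ) (a b : Pt)
    (hab : a ≠ b) (Fk : Set Pt)
    (hconst : ∀ x ∈ openSegment ℝ a b, {f : Pt | f ∈ F ∧ dist f x < r} = Fk) :
    openSegment ℝ a b ⊆ interior (convexHull ℝ Fk) ↔
      (a ∈ convexHull ℝ Fk ∧ b ∈ convexHull ℝ Fk ∧
        ∃ x ∈ openSegment ℝ a b, x ∈ interior (convexHull ℝ Fk)) := by
  have hmid : midpoint ℝ a b ∈ openSegment ℝ a b := by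
    rw [openSegment_eq_image]
    exact ⟨1/2, by norm_num, by rw [midpoint_eq_smul_add]; match_scalars <;> norm_num [invOf_eq_inv]⟩
  have hFk : Fk ⊆ (F : Set Pt) := by
    rw [← hconst _ hmid]; exact fun f hf => hf.1
  have hfin : Fk.Finite := F.finite_toSet.subset hFk
  have hclosed : IsClosed (convexHull ℝ Fk) := hfin.isClosed_convexHull (𝕜 := ℝ)
  have hconv : Convex ℝ (convexHull ℝ Fk) := convex_convexHull ℝ Fk
  constructor
  · intro h
    have hsub : segment ℝ a b ⊆ convexHull ℝ Fk := by
      rw [← closure_openSegment]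
      exact hclosed.closure_subset_iff.mpr (h.trans interior_subset)
    exact ⟨hsub (left_mem_segment ℝ a b), hsub (right_mem_segment ℝ a b),
      midpoint ℝ a b, hmid, h hmid⟩
  · rintro ⟨ha, hb, x, hx, hxi⟩ y hy
    rw [openSegment_eq_image] at hx hy
    obtain ⟨s, ⟨hs0, hs1⟩, rfl⟩ := hx
    obtain ⟨t, ⟨ht0, ht1⟩, rfl⟩ := hy
    rcases lt_trichotomy t s with hts | hts | hts
    · refine hconv.openSegment_interior_closure_subset_interior hxi
        (subset_closure ha) ?_
      rw [openSegment_eq_image]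
      refine ⟨1 - t/s, ⟨by simp [div_lt_one hs0, hts], ?_⟩, ?_⟩
      · have : 0 < t/s := div_pos ht0 hs0
        linarith
      · match_scalars <;> field_simp <;> ring
    · subst hts; exact hxi
    · refine hconv.openSegment_interior_closure_subset_interior hxi
        (subset_closure hb) ?_
      rw [openSegment_eq_image]
      have h1s : (0:ℝ) < 1 - s := by linarith
      refine ⟨(t-s)/(1-s), ⟨div_pos (by linarith) h1s, by
        rw [div_lt_one h1s]; linarith⟩, ?_⟩
      match_scalars <;> field_simp <;> ring
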